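/- With notation as in the Binet–Cauchy expansion of τ(x) = det(V e^{K(x)} D): if all maximal minors D(n_1,...,n_{N_b}) of D are non-negative and at least one is strictly positive, then τ(x) > 0 for all x ∈ ℝ², so the potential u(x) = −2 ∂²_{x_1} log τ(x) is regular (τ has no zeros). -/
import Mathlib


open Matrix Finset

/-- Cauchy–Binet over the reals: the determinant of a product of an `m × n`
and an `n × m` matrix is the sum over strictly monotone selections of the
products of the corresponding maximal minors. -/
lemma cauchyBinet_aux {m n : ℕ} (A : Matrix (Fin m) (Fin n) ℝ) (B : Matrix (Fin n) (Fin m) ℝ) :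
    (A * B).det = ∑ f ∈ Finset.univ.filter
      (fun f : Fin m → Fin n => ∀ i j : Fin m, i < j → f i < f j),
      (A.submatrix id f).det * (B.submatrix f id).det := by
  classical
  set S := Finset.univ.filter
      (fun f : Fin m → Fin n => ∀ i j : Fin m, i < j → f i < f j) with hS
  have step1 : (A * B).det = ∑ p : Fin m → Fin n,
      (∏ i, B (p i) i) * (A.submatrix id p).det := by
    calc (A * B).det = ∑ p : Fin m → Fin n, ∑ σ : Equiv.Perm (Fin m),
          ((Equiv.Perm.sign σ : ℤ) : ℝ) * ∏ i, A (σ i) (p i) * B (p i) i := by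
          simp only [det_apply', mul_apply, prod_univ_sum, mul_sum, Fintype.piFinset_univ]
          rw [Finset.sum_comm]
      _ = _ := by
          refine Finset.sum_congr rfl fun p _ => ?_
          rw [det_apply', Finset.mul_sum]
          refine Finset.sum_congr rfl fun σ _ => ?_
          simp only [submatrix_apply, id_eq, Finset.prod_mul_distrib]
          ring
  have hzero : ∀ p : Fin m → Fin n, ¬ Function.Injective p →
      (∏ i, B (p i) i) * (A.submatrix id p).det = 0 := by
    intro p hp
    obtain ⟨i, j, hij, hne⟩ : ∃ i j, p i = p j ∧ i ≠ j := by
      rw [Function.Injective] at hp; push_neg at hp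
      obtain ⟨i, j, h1, h2⟩ := hp; exact ⟨i, j, h1, h2⟩
    rw [Matrix.det_zero_of_column_eq hne (fun k => by simp [hij]), mul_zero]
  have step2 : ∑ p : Fin m → Fin n, (∏ i, B (p i) i) * (A.submatrix id p).det
      = ∑ p ∈ Finset.univ.filter (fun p : Fin m → Fin n => Function.Injective p),
          (∏ i, B (p i) i) * (A.submatrix id p).det :=
    (Finset.sum_subset (Finset.filter_subset _ _)
      fun p _ hp => hzero p (by simpa using hp)).symm
  have step3 : ∑ p ∈ Finset.univ.filter (fun p : Fin m → Fin n => Function.Injective p),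
      (∏ i, B (p i) i) * (A.submatrix id p).det
      = ∑ q ∈ S ×ˢ (Finset.univ : Finset (Equiv.Perm (Fin m))),
          (∏ i, B ((q.1 ∘ q.2) i) i) * (A.submatrix id (q.1 ∘ q.2)).det := by
    refine (Finset.sum_bij (fun q _ => q.1 ∘ q.2) ?_ ?_ ?_ (fun q _ => rfl)).symm
    · rintro ⟨f, σ⟩ hq
      simp only [hS, Finset.mem_product, Finset.mem_filter, Finset.mem_univ, true_and,
        and_true] at hq ⊢
      have hf : StrictMono f := fun i j h => hq i j h
      exact hf.injective.comp σ.injective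
    · rintro ⟨f₁, σ₁⟩ h₁ ⟨f₂, σ₂⟩ h₂ heq
      simp only [hS, Finset.mem_product, Finset.mem_filter, Finset.mem_univ, true_and,
        and_true] at h₁ h₂
      have hf₁ : StrictMono f₁ := fun i j h => h₁ i j h
      have hf₂ : StrictMono f₂ := fun i j h => h₂ i j h
      have heq' : f₁ ∘ ⇑σ₁ = f₂ ∘ ⇑σ₂ := heq
      have hr : Set.range f₁ = Set.range f₂ := by
        have h : Set.range (f₁ ∘ ⇑σ₁) = Set.range (f₂ ∘ ⇑σ₂) := by rw [heq']
        rwa [Set.range_comp, Set.range_comp, Equiv.range_eq_univ, Equiv.range_eq_univ,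
          Set.image_univ, Set.image_univ] at h
      haveI : WellFoundedLT (Fin m) := inferInstance
      have hf : f₁ = f₂ := (StrictMono.range_inj hf₁ hf₂).mp hr
      subst hf
      have hσ : σ₁ = σ₂ := Equiv.ext fun i => hf₁.injective (congrFun heq' i)
      simp [hσ]
    · intro p hp
      simp only [Finset.mem_filter, Finset.mem_univ, true_and] at hp
      set s : Finset (Fin n) := Finset.univ.image p with hs
      have hcard : s.card = m := by
        rw [hs, Finset.card_image_of_injective _ hp, Finset.card_univ, Fintype.card_fin]
      have hex : ∀ i, ∃ j, s.orderEmbOfFin hcard j = p i := by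
        intro i
        have hmem : p i ∈ Set.range (s.orderEmbOfFin hcard) := by
          rw [Finset.range_orderEmbOfFin]
          exact Finset.mem_coe.mpr (Finset.mem_image_of_mem _ (Finset.mem_univ i))
        exact hmem
      choose σ' hσ' using hex
      have hσinj : Function.Injective σ' := by
        intro i j h
        apply hp
        rw [← hσ' i, ← hσ' j, h]
      have hbij := Finite.injective_iff_bijective.mp hσinj
      refine ⟨(fun k => s.orderEmbOfFin hcard k, Equiv.ofBijective σ' hbij), ?_, ?_⟩
      · simp only [hS, Finset.mem_product, Finset.mem_filter, Finset.mem_univ, true_and,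
          and_true]
        intro i j h
        exact (s.orderEmbOfFin hcard).strictMono h
      · funext i
        exact hσ' i
  have step4 : ∀ f ∈ S, ∑ σ : Equiv.Perm (Fin m),
      (∏ i, B ((f ∘ σ) i) i) * (A.submatrix id (f ∘ σ)).det
      = (A.submatrix id f).det * (B.submatrix f id).det := by
    intro f hf
    have hsub : ∀ σ : Equiv.Perm (Fin m),
        A.submatrix id (f ∘ σ) = (A.submatrix id f).submatrix id σ := fun σ => rfl
    have hterm : ∀ σ : Equiv.Perm (Fin m),
        (∏ i, B ((f ∘ σ) i) i) * (A.submatrix id (f ∘ σ)).det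
        = (A.submatrix id f).det *
          (((Equiv.Perm.sign σ : ℤ) : ℝ) * ∏ i, (B.submatrix f id) (σ i) i) := by
      intro σ
      rw [hsub σ, Matrix.det_permute']
      simp only [Function.comp_apply, submatrix_apply, id_eq]
      push_cast
      ring
    rw [Finset.sum_congr rfl (fun σ _ => hterm σ), ← Finset.mul_sum]
    congr 1
    rw [det_apply']
  rw [step1, step2, step3, Finset.sum_product]
  exact Finset.sum_congr rfl step4

/-- Regularity: nonnegative maximal minors (one positive) imply τ(x) > 0 everywhere. -/
theorem stmt_5 (NN Nb : ℕ) (hNb : 1 ≤ Nb) (hNNb : Nb ≤ NN)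
    (κ : Fin NN → ℝ) (hκ : StrictMono κ)
    (V : Matrix (Fin Nb) (Fin NN) ℝ)
    (hV : ∀ i j, V i j = κ j ^ (i : ℕ))
    (D : Matrix (Fin NN) (Fin Nb) ℝ)
    (hnonneg : ∀ e : Fin Nb → Fin NN, (∀ i j : Fin Nb, i < j → e i < e j) →
      0 ≤ (D.submatrix e id).det)
    (hpos : ∃ e : Fin Nb → Fin NN, (∀ i j : Fin Nb, i < j → e i < e j) ∧
      0 < (D.submatrix e id).det) :
    ∀ x₁ x₂ : ℝ,
      0 < (V * Matrix.diagonal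
            (fun n => Real.exp (κ n * x₁ + κ n ^ 2 * x₂)) * D).det := by
  intro x₁ x₂
  classical
  rw [Matrix.mul_assoc, cauchyBinet_aux]
  have hVpos : ∀ f : Fin Nb → Fin NN, StrictMono f → 0 < (V.submatrix id f).det := by
    intro f hf
    have hV' : V.submatrix id f = (Matrix.vandermonde (fun i => κ (f i)))ᵀ := by
      ext i j
      simp [hV, Matrix.vandermonde]
    rw [hV', Matrix.det_transpose, Matrix.det_vandermonde]
    refine Finset.prod_pos fun i _ => Finset.prod_pos fun j hj => ?_
    exact sub_pos.mpr (hκ (hf (Finset.mem_Ioi.mp hj)))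
  have hED : ∀ f : Fin Nb → Fin NN,
      ((Matrix.diagonal (fun n => Real.exp (κ n * x₁ + κ n ^ 2 * x₂)) * D).submatrix f id).det
      = (∏ i, Real.exp (κ (f i) * x₁ + κ (f i) ^ 2 * x₂)) * (D.submatrix f id).det := by
    intro f
    have h : (Matrix.diagonal (fun n => Real.exp (κ n * x₁ + κ n ^ 2 * x₂)) * D).submatrix f id
        = Matrix.diagonal (fun i => Real.exp (κ (f i) * x₁ + κ (f i) ^ 2 * x₂)) *
          (D.submatrix f id) := by
      ext i j
      simp [Matrix.submatrix_apply, Matrix.diagonal_mul]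
    rw [h, Matrix.det_mul, Matrix.det_diagonal]
  refine Finset.sum_pos' ?_ ?_
  · intro f hfmem
    simp only [Finset.mem_filter, Finset.mem_univ, true_and] at hfmem
    have hf : StrictMono f := fun i j h => hfmem i j h
    rw [hED f]
    exact mul_nonneg (hVpos f hf).le
      (mul_nonneg (Finset.prod_pos fun i _ => Real.exp_pos _).le (hnonneg f hfmem))
  · obtain ⟨e, he, hde⟩ := hpos
    refine ⟨e, Finset.mem_filter.mpr ⟨Finset.mem_univ _, he⟩, ?_⟩
    have hf : StrictMono e := fun i j h => he i j h
    rw [hED e]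
    exact mul_pos (hVpos e hf)
      (mul_pos (Finset.prod_pos fun i _ => Real.exp_pos _) hde)
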